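/- Law of large numbers for the kernel sum (upper-left Gram entry): (n h_n^d)^{-1} Σ_{i=1}^n K((X_i − x)/h_n) converges in probability to f(0) · ∫_{ℝ^d} K(L u) du as n → ∞. -/

import Mathlib

open MeasureTheory Metric Filter

open scoped NNReal ENNReal

lemma aux_int_of_bdd {α : Type*} [MeasurableSpace α] (μ : Measure α) [IsFiniteMeasure μ]
    {g : α → ℝ} (hg : AEStronglyMeasurable g μ) (b : ℝ) (hb : ∀ x, ‖g x‖ ≤ b) :
    Integrable g μ :=
  memLp_one_iff_integrable.mp (MemLp.of_bound hg b (ae_of_all _ hb))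

lemma aux_memLp2 {α : Type*} [MeasurableSpace α] (μ : Measure α) [IsFiniteMeasure μ]
    {g : α → ℝ} (hg : AEStronglyMeasurable g μ) (b : ℝ) (hb : ∀ x, ‖g x‖ ≤ b) :
    MemLp g 2 μ :=
  MemLp.of_bound hg b (ae_of_all _ hb)

lemma aux_slope {E F : Type*} [NormedAddCommGroup E] [NormedSpace ℝ E]
    [NormedAddCommGroup F] [NormedSpace ℝ F]
    {φ : E → F} {L : E →L[ℝ] F} (hφ : HasFDerivAt φ L 0) (u : E)
    {h : ℕ → ℝ} (hpos : ∀ n, 0 < h n) (h0 : Tendsto h atTop (nhds 0)) :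
    Tendsto (fun n => (h n)⁻¹ • (φ (h n • u) - φ 0)) atTop (nhds (L u)) := by
  have hg : HasDerivAt (fun t : ℝ => φ (t • u)) (L u) 0 := by
    have h1 : HasDerivAt (fun t : ℝ => t • u) ((1:ℝ) • u) 0 :=
      (hasDerivAt_id (0:ℝ)).smul_const u
    have hφ' : HasFDerivAt φ L ((0:ℝ) • u) := by simpa using hφ
    have := hφ'.comp_hasDerivAt (0:ℝ) (by simpa using h1 : HasDerivAt (fun t : ℝ => t • u) u 0)
    exact this
  have hs := hasDerivAt_iff_tendsto_slope.mp hg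
  have hh : Tendsto h atTop (nhdsWithin 0 {(0:ℝ)}ᶜ) :=
    tendsto_nhdsWithin_of_tendsto_nhds_of_eventually_within _ h0
      (Eventually.of_forall fun n => (hpos n).ne')
  have := hs.comp hh
  have heq : (slope (fun t : ℝ => φ (t • u)) 0) ∘ h =
      fun n => (h n)⁻¹ • (φ (h n • u) - φ 0) := by
    funext n
    simp [slope, Function.comp]
  rwa [heq] at this


lemma aux_analytic
    (d D : ℕ) (r : ℝ) (hr : 0 < r)
    (φ : EuclideanSpace ℝ (Fin d) → EuclideanSpace ℝ (Fin D))
    (hφ : ContDiff ℝ 1 φ)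
    (c C : ℝ) (hc : 0 < c)
    (hbil : ∀ z ∈ closedBall (0 : EuclideanSpace ℝ (Fin d)) r,
      ∀ z' ∈ closedBall (0 : EuclideanSpace ℝ (Fin d)) r,
        c * ‖z - z'‖ ≤ ‖φ z - φ z'‖ ∧ ‖φ z - φ z'‖ ≤ C * ‖z - z'‖)
    (f : EuclideanSpace ℝ (Fin d) → ℝ)
    (hf_meas : Measurable f)
    (hf_nonneg : ∀ z, 0 ≤ f z)
    (hf_supp : ∀ z ∉ closedBall (0 : EuclideanSpace ℝ (Fin d)) r, f z = 0)
    (M : ℝ) (hM : ∀ z, f z ≤ M)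
    (hf_cont : ContinuousAt f 0)
    (K : EuclideanSpace ℝ (Fin D) → ℝ)
    (hK_nonneg : ∀ u, 0 ≤ K u) (hK_cont : Continuous K)
    (hK_supp : HasCompactSupport K)
    (h : ℕ → ℝ) (hh_pos : ∀ n, 0 < h n)
    (hh0 : Tendsto h atTop (nhds 0)) :
    Tendsto (fun n => (∫ y, K ((h n)⁻¹ • (y - φ 0)) ∂(Measure.map φ
        ((volume.restrict (closedBall (0 : EuclideanSpace ℝ (Fin d)) r)).withDensity
          fun z => ENNReal.ofReal (f z)))) / (h n ^ d)) atTop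
      (nhds (f 0 * ∫ u, K (fderiv ℝ φ 0 u))) := by
  obtain ⟨Kb, hKbn⟩ := hK_supp.exists_bound_of_continuous hK_cont
  have hKb' : ∀ y, K y ≤ Kb := fun y =>
    (le_abs_self _).trans (by simpa [Real.norm_eq_abs] using hKbn y)
  have hKb0 : 0 ≤ Kb := le_trans (hK_nonneg 0) (hKb' 0)
  obtain ⟨R, hR0, hRsub⟩ := hK_supp.isBounded.subset_closedBall_lt 0 0
  have hM0 : 0 ≤ M := le_trans (hf_nonneg 0) (hM 0)
  set L := fderiv ℝ φ 0 with hLdef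
  have hLder : HasFDerivAt φ L 0 := (hφ.differentiable one_ne_zero).differentiableAt.hasFDerivAt
  set B := closedBall (0 : EuclideanSpace ℝ (Fin d)) r with hBdef
  set F : ℕ → EuclideanSpace ℝ (Fin d) → ℝ :=
    fun n u => f (h n • u) * K ((h n)⁻¹ • (φ (h n • u) - φ 0)) with hFdef
  -- pointwise convergence
  have hpt : ∀ u, Tendsto (fun n => F n u) atTop (nhds (f 0 * K (L u))) := by
    intro u
    have h1 : Tendsto (fun n => h n • u) atTop (nhds 0) := by
      have := hh0.smul_const u; simpa using this
    exact (hf_cont.tendsto.comp h1).mul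
      ((hK_cont.tendsto (L u)).comp (aux_slope hLder u hh_pos hh0))
  -- measurability
  have hFmeas : ∀ n, AEStronglyMeasurable (F n) volume := by
    intro n
    apply Measurable.aestronglyMeasurable
    exact (hf_meas.comp (measurable_const_smul (h n))).mul
      (hK_cont.comp ((((hφ.continuous.comp (continuous_const_smul (h n))).sub
        continuous_const).const_smul ((h n)⁻¹)))).measurable
  -- domination
  set g : EuclideanSpace ℝ (Fin d) → ℝ :=
    (closedBall (0:EuclideanSpace ℝ (Fin d)) (R/c)).indicator (fun _ => M * Kb) with hgdef
  have hbound : ∀ n, ∀ᵐ u, ‖F n u‖ ≤ g u := by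
    intro n
    refine ae_of_all _ fun u => ?_
    by_cases hu : u ∈ closedBall (0:EuclideanSpace ℝ (Fin d)) (R/c)
    · rw [hgdef, Set.indicator_of_mem hu]
      rw [Real.norm_eq_abs, abs_of_nonneg (mul_nonneg (hf_nonneg _) (hK_nonneg _))]
      exact mul_le_mul (hM _) (hKb' _) (hK_nonneg _) hM0
    · rw [hgdef, Set.indicator_of_notMem hu]
      have hF0 : F n u = 0 := by
        by_cases hz : h n • u ∈ B
        · have hKz : K ((h n)⁻¹ • (φ (h n • u) - φ 0)) = 0 := by
            by_contra hne
            have hmem : ((h n)⁻¹ • (φ (h n • u) - φ 0)) ∈ tsupport K :=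
              subset_tsupport K hne
            have hnorm := mem_closedBall_zero_iff.mp (hRsub hmem)
            rw [norm_smul, Real.norm_eq_abs, abs_of_pos (inv_pos.2 (hh_pos n))] at hnorm
            have hle : ‖φ (h n • u) - φ 0‖ ≤ R * h n := by
              have := (mul_le_mul_iff_of_pos_right (hh_pos n)).mpr hnorm
              rwa [mul_comm ((h n)⁻¹) _, mul_assoc, inv_mul_cancel₀ (hh_pos n).ne',
                mul_one] at this
            have h0B : (0 : EuclideanSpace ℝ (Fin d)) ∈ B := mem_closedBall_self hr.le
            have hbl := (hbil _ hz _ h0B).1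
            rw [sub_zero, norm_smul, Real.norm_eq_abs, abs_of_pos (hh_pos n)] at hbl
            have hcu : c * ‖u‖ ≤ R := by
              have h1 : c * (h n * ‖u‖) ≤ R * h n := le_trans hbl hle
              nlinarith [hh_pos n]
            have : ‖u‖ ≤ R / c := (le_div_iff₀ hc).mpr (by linarith [hcu])
            exact hu (mem_closedBall_zero_iff.mpr this)
          simp [hFdef, hKz]
        · simp [hFdef, hf_supp _ hz]
      simp [hF0]
  have hgint : Integrable g volume := by
    rw [hgdef, integrable_indicator_iff measurableSet_closedBall]
    exact integrableOn_const measure_closedBall_lt_top.ne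
  have hDC : Tendsto (fun n => ∫ u, F n u) atTop (nhds (∫ u, f 0 * K (L u))) :=
    tendsto_integral_filter_of_dominated_convergence g (Eventually.of_forall hFmeas)
      (Eventually.of_forall hbound) hgint (ae_of_all _ hpt)
  -- change of variables identity
  set G : EuclideanSpace ℝ (Fin d) → ℝ := fun z => f z * K ((h 0)⁻¹ • (φ z - φ 0)) with hGdef
  have hid : ∀ n, (∫ y, K ((h n)⁻¹ • (y - φ 0)) ∂(Measure.map φ
      ((volume.restrict B).withDensity fun z => ENNReal.ofReal (f z)))) / (h n ^ d)
      = ∫ u, F n u := by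
    intro n
    set Gn : EuclideanSpace ℝ (Fin d) → ℝ :=
      fun z => f z * K ((h n)⁻¹ • (φ z - φ 0)) with hGndef
    have hKn_cont : Continuous fun y : EuclideanSpace ℝ (Fin D) =>
        K ((h n)⁻¹ • (y - φ 0)) :=
      hK_cont.comp (by fun_prop)
    have e1 : (∫ y, K ((h n)⁻¹ • (y - φ 0)) ∂(Measure.map φ
        ((volume.restrict B).withDensity fun z => ENNReal.ofReal (f z))))
        = ∫ z, K ((h n)⁻¹ • (φ z - φ 0))
            ∂((volume.restrict B).withDensity fun z => ENNReal.ofReal (f z)) :=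
      integral_map hφ.continuous.aemeasurable hKn_cont.aestronglyMeasurable
    have e2 : (∫ z, K ((h n)⁻¹ • (φ z - φ 0))
          ∂((volume.restrict B).withDensity fun z => ENNReal.ofReal (f z)))
        = ∫ z in B, Gn z := by
      rw [show (fun z => ENNReal.ofReal (f z))
          = (fun z => ((Real.toNNReal (f z) : ℝ≥0) : ℝ≥0∞)) from rfl,
        integral_withDensity_eq_integral_smul hf_meas.real_toNNReal]
      refine setIntegral_congr_fun measurableSet_closedBall fun z _ => ?_
      simp [hGndef, NNReal.smul_def, Real.coe_toNNReal _ (hf_nonneg z)]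
    have e3 : ∫ z in B, Gn z = ∫ z, Gn z :=
      setIntegral_eq_integral_of_forall_compl_eq_zero fun z hz => by
        simp [hGndef, hf_supp z hz]
    have e4 : ∫ u, Gn (h n • u) = (h n ^ d)⁻¹ • ∫ z, Gn z := by
      have := Measure.integral_comp_smul_of_nonneg (μ := volume) Gn (h n) (hR := (hh_pos n).le)
      rwa [finrank_euclideanSpace_fin] at this
    have e5 : ∀ u, Gn (h n • u) = F n u := fun u => rfl
    rw [e1, e2, e3]
    rw [div_eq_inv_mul, ← smul_eq_mul, ← e4]
  have : (fun n => (∫ y, K ((h n)⁻¹ • (y - φ 0)) ∂(Measure.map φ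
      ((volume.restrict B).withDensity fun z => ENNReal.ofReal (f z)))) / (h n ^ d))
      = fun n => ∫ u, F n u := funext hid
  rw [this]
  rw [show (f 0 * ∫ u, K (fderiv ℝ φ 0 u)) = ∫ u, f 0 * K (L u) by
    rw [integral_const_mul]]
  exact hDC


/-- LLN for the kernel sum (upper-left Gram entry):
`(n h_n^d)⁻¹ Σ_{i<n} K((X_i − x)/h_n) → f 0 · ∫ K (L u) du` in probability. -/
theorem lln_kernel_sum
    (d D : ℕ) (hd : 0 < d) (hdD : d ≤ D) (r : ℝ) (hr : 0 < r)
    (φ : EuclideanSpace ℝ (Fin d) → EuclideanSpace ℝ (Fin D))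
    (hφ : ContDiff ℝ 1 φ)
    (c C : ℝ) (hc : 0 < c) (hcC : c ≤ C)
    (hbil : ∀ z ∈ closedBall (0 : EuclideanSpace ℝ (Fin d)) r,
      ∀ z' ∈ closedBall (0 : EuclideanSpace ℝ (Fin d)) r,
        c * ‖z - z'‖ ≤ ‖φ z - φ z'‖ ∧ ‖φ z - φ z'‖ ≤ C * ‖z - z'‖)
    (hL : Function.Injective (fderiv ℝ φ 0))
    (f : EuclideanSpace ℝ (Fin d) → ℝ)
    (hf_meas : Measurable f)
    (hf_nonneg : ∀ z, 0 ≤ f z)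
    (hf_supp : ∀ z ∉ closedBall (0 : EuclideanSpace ℝ (Fin d)) r, f z = 0)
    (hf_bdd : ∃ M : ℝ, ∀ z, f z ≤ M)
    (hf_prob : ∫ z, f z = 1)
    (hf_cont : ContinuousAt f 0) (hf_pos : 0 < f 0)
    (K : EuclideanSpace ℝ (Fin D) → ℝ)
    (hK_nonneg : ∀ u, 0 ≤ K u) (hK_cont : Continuous K)
    (hK_supp : HasCompactSupport K)
    (Ω : Type*) [MeasurableSpace Ω] (ℙ : Measure Ω) [IsProbabilityMeasure ℙ]
    (X : ℕ → Ω → EuclideanSpace ℝ (Fin D))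
    (hX_meas : ∀ i, Measurable (X i))
    (hX_indep : ProbabilityTheory.iIndepFun X ℙ)
    (hX_law : ∀ i, Measure.map (X i) ℙ =
      Measure.map φ
        ((volume.restrict (closedBall (0 : EuclideanSpace ℝ (Fin d)) r)).withDensity
          fun z => ENNReal.ofReal (f z)))
    (h : ℕ → ℝ) (hh_pos : ∀ n, 0 < h n)
    (hh0 : Tendsto h atTop (nhds 0))
    (hnh : Tendsto (fun n : ℕ => (n : ℝ) * h n ^ d) atTop atTop) :
    TendstoInMeasure ℙ
      (fun (n : ℕ) ω =>
        (∑ i ∈ Finset.range n, K ((h n)⁻¹ • (X i ω - φ 0))) / ((n : ℝ) * h n ^ d))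
      atTop (fun _ => f 0 * ∫ u, K (fderiv ℝ φ 0 u)) := by
  obtain ⟨M, hM⟩ := hf_bdd
  obtain ⟨Kb, hKbn⟩ := hK_supp.exists_bound_of_continuous hK_cont
  have hKb' : ∀ y, K y ≤ Kb := fun y =>
    (le_abs_self _).trans (by simpa [Real.norm_eq_abs] using hKbn y)
  have hKb0 : 0 ≤ Kb := le_trans (hK_nonneg 0) (hKb' 0)
  set Pm : Measure (EuclideanSpace ℝ (Fin D)) := Measure.map φ
      ((volume.restrict (closedBall (0 : EuclideanSpace ℝ (Fin d)) r)).withDensity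
        fun z => ENNReal.ofReal (f z)) with hPmdef
  have hPprob : IsProbabilityMeasure Pm := by
    rw [← hX_law 0]
    exact Measure.isProbabilityMeasure_map (hX_meas 0).aemeasurable
  set a : ℕ → ℝ := fun n => ∫ y, K ((h n)⁻¹ • (y - φ 0)) ∂Pm with hadef
  set μn : ℕ → ℝ := fun n => a n / h n ^ d with hμndef
  have hμ : Tendsto μn atTop (nhds (f 0 * ∫ u, K (fderiv ℝ φ 0 u))) :=
    aux_analytic d D r hr φ hφ c C hc hbil f hf_meas hf_nonneg hf_supp M hM hf_cont
      K hK_nonneg hK_cont hK_supp h hh_pos hh0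
  -- basic facts about the kernel composed maps
  have hKn_cont : ∀ n, Continuous fun y : EuclideanSpace ℝ (Fin D) =>
      K ((h n)⁻¹ • (y - φ 0)) := fun n =>
    hK_cont.comp (by fun_prop)
  set Y : ℕ → ℕ → Ω → ℝ := fun n i ω => K ((h n)⁻¹ • (X i ω - φ 0)) with hYdef
  have hYmeas : ∀ n i, Measurable (Y n i) := fun n i =>
    (hKn_cont n).measurable.comp (hX_meas i)
  have hYbd : ∀ n i ω, ‖Y n i ω‖ ≤ Kb := fun n i ω => by
    rw [Real.norm_eq_abs, abs_of_nonneg (hK_nonneg _)]; exact hKb' _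
  have hY2 : ∀ n i, MemLp (Y n i) 2 ℙ := fun n i =>
    aux_memLp2 ℙ (hYmeas n i).aestronglyMeasurable Kb (hYbd n i)
  have hYint : ∀ n i, Integrable (Y n i) ℙ := fun n i =>
    aux_int_of_bdd ℙ (hYmeas n i).aestronglyMeasurable Kb (hYbd n i)
  have hEY : ∀ n i, ∫ ω, Y n i ω ∂ℙ = a n := by
    intro n i
    have : ∫ ω, Y n i ω ∂ℙ
        = ∫ y, K ((h n)⁻¹ • (y - φ 0)) ∂(Measure.map (X i) ℙ) :=
      (integral_map (hX_meas i).aemeasurable (hKn_cont n).aestronglyMeasurable).symm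
    rw [this, hX_law i, hadef]
  -- second moment bound
  have hEY2 : ∀ n i, ∫ ω, (Y n i ω) ^ 2 ∂ℙ ≤ Kb * a n := by
    intro n i
    have e : ∫ ω, (Y n i ω) ^ 2 ∂ℙ
        = ∫ y, (K ((h n)⁻¹ • (y - φ 0))) ^ 2 ∂(Measure.map (X i) ℙ) :=
      (integral_map (hX_meas i).aemeasurable
        (((hKn_cont n).pow 2).aestronglyMeasurable)).symm
    rw [e, hX_law i]
    have int1 : Integrable (fun y => (K ((h n)⁻¹ • (y - φ 0))) ^ 2) Pm := by
      refine aux_int_of_bdd Pm ((hKn_cont n).pow 2).aestronglyMeasurable (Kb * Kb)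
        fun y => ?_
      rw [Real.norm_eq_abs, abs_of_nonneg (by positivity), sq]
      exact mul_le_mul (hKb' _) (hKb' _) (hK_nonneg _) hKb0
    have int2 : Integrable (fun y => Kb * K ((h n)⁻¹ • (y - φ 0))) Pm := by
      refine aux_int_of_bdd Pm (continuous_const.mul (hKn_cont n)).aestronglyMeasurable
        (Kb * Kb) fun y => ?_
      rw [Real.norm_eq_abs, abs_of_nonneg (mul_nonneg hKb0 (hK_nonneg _))]
      exact mul_le_mul_of_nonneg_left (hKb' _) hKb0
    calc ∫ y, (K ((h n)⁻¹ • (y - φ 0))) ^ 2 ∂Pm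
        ≤ ∫ y, Kb * K ((h n)⁻¹ • (y - φ 0)) ∂Pm := by
          refine integral_mono int1 int2 fun y => ?_
          rw [sq]
          exact mul_le_mul_of_nonneg_right (hKb' _) (hK_nonneg _)
      _ = Kb * a n := by rw [integral_const_mul, hadef]
  have hVarY : ∀ n i, ProbabilityTheory.variance (Y n i) ℙ ≤ Kb * a n := by
    intro n i
    refine le_trans (ProbabilityTheory.variance_le_expectation_sq
      (hYmeas n i).aestronglyMeasurable) ?_
    have : (Y n i) ^ 2 = fun ω => (Y n i ω) ^ 2 := rfl
    rw [this]
    exact hEY2 n i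
  -- pairwise independence
  have hpair : ∀ n, Set.Pairwise ↑(Finset.range n)
      fun i j => ProbabilityTheory.IndepFun (Y n i) (Y n j) ℙ := by
    intro n i _ j _ hij
    exact (hX_indep.indepFun hij).comp (hKn_cont n).measurable (hKn_cont n).measurable
  -- variance of the sum
  have hVarS : ∀ n, ProbabilityTheory.variance (∑ i ∈ Finset.range n, Y n i) ℙ
      ≤ n * (Kb * a n) := by
    intro n
    rw [ProbabilityTheory.IndepFun.variance_sum (fun i _ => hY2 n i) (hpair n)]
    calc ∑ i ∈ Finset.range n, ProbabilityTheory.variance (Y n i) ℙ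
        ≤ ∑ _i ∈ Finset.range n, (Kb * a n) := Finset.sum_le_sum fun i _ => hVarY n i
      _ = n * (Kb * a n) := by simp [mul_comm]
  -- the normalized sums
  set g : ℕ → Ω → ℝ := fun n ω =>
    (∑ i ∈ Finset.range n, K ((h n)⁻¹ • (X i ω - φ 0))) / ((n : ℝ) * h n ^ d) with hgdef
  have hgrw : ∀ n, g n = fun ω =>
      ((n : ℝ) * h n ^ d)⁻¹ * (∑ i ∈ Finset.range n, Y n i) ω := by
    intro n; funext ω
    simp [hgdef, hYdef, div_eq_inv_mul, Finset.sum_apply]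
  have hg2 : ∀ n, MemLp (g n) 2 ℙ := by
    intro n
    rw [hgrw n]
    exact ((memLp_finset_sum' _ (fun i _ => hY2 n i)).const_mul _)
  have hEg : ∀ n, 1 ≤ n → ∫ ω, g n ω ∂ℙ = μn n := by
    intro n hn
    rw [hgrw n]
    rw [integral_const_mul]
    have : ∫ ω, (∑ i ∈ Finset.range n, Y n i) ω ∂ℙ = n * a n := by
      have e : ∀ ω, (∑ i ∈ Finset.range n, Y n i) ω = ∑ i ∈ Finset.range n, Y n i ω :=
        fun ω => Finset.sum_apply ω _ _
      rw [integral_congr_ae (ae_of_all _ e), integral_finset_sum _ fun i _ => hYint n i]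
      simp [hEY n]
    rw [this, hμndef]
    have hn0 : (n:ℝ) ≠ 0 := Nat.cast_ne_zero.mpr (by omega)
    have hh0' : h n ^ d ≠ 0 := (pow_pos (hh_pos n) d).ne'
    field_simp
  have hVarg : ∀ n, 1 ≤ n → ProbabilityTheory.variance (g n) ℙ
      ≤ Kb * μn n * ((n : ℝ) * h n ^ d)⁻¹ := by
    intro n hn
    rw [hgrw n]
    have : (fun ω => ((n : ℝ) * h n ^ d)⁻¹ * (∑ i ∈ Finset.range n, Y n i) ω)
        = fun ω => ((n : ℝ) * h n ^ d)⁻¹ * ((∑ i ∈ Finset.range n, Y n i) ω) := rfl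
    rw [ProbabilityTheory.variance_const_mul]
    have hb := hVarS n
    have hn0 : (n:ℝ) ≠ 0 := Nat.cast_ne_zero.mpr (by omega)
    have hh0' : (0:ℝ) < h n ^ d := pow_pos (hh_pos n) d
    have hT : (0:ℝ) < (n : ℝ) * h n ^ d := by positivity
    calc (((n : ℝ) * h n ^ d)⁻¹) ^ 2
          * ProbabilityTheory.variance (∑ i ∈ Finset.range n, Y n i) ℙ
        ≤ (((n : ℝ) * h n ^ d)⁻¹) ^ 2 * ((n:ℝ) * (Kb * a n)) := by
          exact mul_le_mul_of_nonneg_left hb (by positivity)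
      _ = Kb * μn n * ((n : ℝ) * h n ^ d)⁻¹ := by
          rw [hμndef]
          field_simp
  -- final assembly
  refine tendstoInMeasure_iff_dist.mpr fun ε hε => ?_
  have hinv : Tendsto (fun n : ℕ => ((n:ℝ) * h n ^ d)⁻¹) atTop (nhds 0) :=
    hnh.inv_tendsto_atTop
  have hbnd : Tendsto
      (fun n : ℕ => ENNReal.ofReal ((Kb * μn n * ((n:ℝ) * h n ^ d)⁻¹) / (ε/2)^2))
      atTop (nhds 0) := by
    have h1 : Tendsto (fun n : ℕ => (Kb * μn n * ((n:ℝ) * h n ^ d)⁻¹) / (ε/2)^2)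
        atTop (nhds 0) := by
      have := ((tendsto_const_nhds (x := Kb)).mul hμ).mul hinv
      have := this.div_const ((ε/2)^2)
      simpa using this
    have := ENNReal.tendsto_ofReal h1
    simpa using this
  refine tendsto_of_tendsto_of_tendsto_of_le_of_le' tendsto_const_nhds hbnd
    (Eventually.of_forall fun n => zero_le) ?_
  have hev1 : ∀ᶠ n in atTop, |μn n - f 0 * ∫ u, K (fderiv ℝ φ 0 u)| < ε/2 := by
    have := hμ (Metric.ball_mem_nhds _ (by positivity : (0:ℝ) < ε/2))
    filter_upwards [this] with n hn
    simpa [Real.dist_eq] using hn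
  filter_upwards [hev1, eventually_ge_atTop 1] with n hdist hn1
  -- Chebyshev step
  have hE := hEg n hn1
  have hsub : {ω | ε ≤ dist (g n ω) (f 0 * ∫ u, K (fderiv ℝ φ 0 u))}
      ⊆ {ω | ε/2 ≤ |g n ω - ∫ ω, g n ω ∂ℙ|} := by
    intro ω hω
    simp only [Set.mem_setOf_eq] at hω ⊢
    rw [hE]
    rw [Real.dist_eq] at hω
    have htri : |g n ω - f 0 * ∫ u, K (fderiv ℝ φ 0 u)|
        ≤ |g n ω - μn n| + |μn n - f 0 * ∫ u, K (fderiv ℝ φ 0 u)| := abs_sub_le _ _ _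
    linarith
  have hcheb := ProbabilityTheory.meas_ge_le_variance_div_sq (hg2 n)
    (show (0:ℝ) < ε/2 by positivity)
  calc ℙ {ω | ε ≤ dist (g n ω) (f 0 * ∫ u, K (fderiv ℝ φ 0 u))}
      ≤ ℙ {ω | ε/2 ≤ |g n ω - ∫ ω, g n ω ∂ℙ|} := measure_mono hsub
    _ ≤ ENNReal.ofReal (ProbabilityTheory.variance (g n) ℙ / (ε/2)^2) := hcheb
    _ ≤ ENNReal.ofReal ((Kb * μn n * ((n:ℝ) * h n ^ d)⁻¹) / (ε/2)^2) := by
        apply ENNReal.ofReal_le_ofReal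
        have h2 : (0:ℝ) < (ε/2)^2 := by positivity
        exact (div_le_div_iff_of_pos_right h2).mpr (hVarg n hn1)
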